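/- arXiv:0812.4423 — 3 statements merged into one kernel-verified Lean document; each statement's English description precedes it below -/
import Mathlib

section
/- Let (Ω, P) be a probability space, let m ≥ 6 be a natural number, let p ∈ (0,1], set λ = p/2 and N = (8/p)^m. Let A_1, …, A_m be events and N_1, …, N_m be real numbers satisfying N_j ≥ (λ/2)^{j−1}·N for each j, such that P(A_1) ≥ 1 − exp(−2·N_1·(p−λ)²) and, for each j ≥ 2, P(A_1 ∩ ⋯ ∩ A_j) ≥ (1 − exp(−2·N_j·(p−λ)²))·P(A_1 ∩ ⋯ ∩ A_{j−1}). Assume moreover that log m ≤ 2·(λ/2)^{m−1}·N·(p−λ)². Then P(A_1 ∩ ⋯ ∩ A_m) ≥ 1/3. -/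
open MeasureTheory

/-- Probabilistic core of Proposition 1 of the paper: with N = (8/p)^m
initial states, per-round failure probabilities bounded via Hoeffding's
inequality, and the condition log m ≤ 2(λ/2)^(m-1) N (p-λ)², all m rounds
of the quantum iteration algorithm succeed with probability at least 1/3. -/
theorem stmt_2 {Ω : Type*} [MeasurableSpace Ω] (P : Measure Ω)
    [IsProbabilityMeasure P]
    (m : ℕ) (hm : 6 ≤ m) (p : ℝ) (hp0 : 0 < p) (hp1 : p ≤ 1)
    (lam N : ℝ) (hlam : lam = p / 2) (hN : N = (8 / p) ^ m)
    (A : ℕ → Set Ω) (Nj : ℕ → ℝ)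
    (hNj : ∀ j, 1 ≤ j → j ≤ m → (lam / 2) ^ (j - 1) * N ≤ Nj j)
    (h1 : 1 - Real.exp (-2 * Nj 1 * (p - lam) ^ 2) ≤ (P (A 1)).toReal)
    (hj : ∀ j, 2 ≤ j → j ≤ m →
      (1 - Real.exp (-2 * Nj j * (p - lam) ^ 2)) *
          (P (⋂ i ∈ Finset.Icc 1 (j - 1), A i)).toReal ≤
        (P (⋂ i ∈ Finset.Icc 1 j, A i)).toReal)
    (hlog : Real.log m ≤ 2 * (lam / 2) ^ (m - 1) * N * (p - lam) ^ 2) :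
    1 / 3 ≤ (P (⋂ i ∈ Finset.Icc 1 m, A i)).toReal := by
  have hlam0 : 0 < lam := by rw [hlam]; linarith
  have hlam2 : lam ≤ 1 / 2 := by rw [hlam]; linarith
  have hq0 : (0:ℝ) < lam / 2 := by linarith
  have hNpos : 0 < N := by
    rw [hN]; positivity
  have hc : 0 < (p - lam) ^ 2 := by
    have : p - lam = p / 2 := by rw [hlam]; ring
    rw [this]; positivity
  have hm1 : (1:ℝ) < m := by exact_mod_cast lt_of_lt_of_le (by norm_num) hm
  have hlogm : 0 < Real.log m := Real.log_pos hm1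
  have hmpos : (0:ℝ) < m := by linarith
  -- 4^n ≥ n+1
  have hpow4 : ∀ n : ℕ, (n:ℝ) + 1 ≤ 4 ^ n := by
    intro n
    have h := one_add_mul_le_pow (a := (3:ℝ)) (by norm_num) n
    norm_num at h
    have hn : (0:ℝ) ≤ (n:ℝ) := Nat.cast_nonneg n
    linarith
  -- key bound on failure probability of round j
  have key : ∀ j, 1 ≤ j → j ≤ m →
      Real.exp (-2 * Nj j * (p - lam) ^ 2) ≤ (1/6:ℝ) ^ (m - j + 1) := by
    intro j hj1 hjm
    have hpowsplit : (lam/2) ^ (j-1) * (lam/2) ^ (m-j) = (lam/2) ^ (m-1) := by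
      rw [← pow_add]; congr 1; omega
    have hinvpow : (2/lam) ^ (m-j) * (lam/2) ^ (m-j) = 1 := by
      rw [← mul_pow]
      have : (2/lam) * (lam/2) = 1 := by field_simp
      rw [this, one_pow]
    -- (2/lam)^(m-j) * 2 (lam/2)^(m-1) N c = 2 (lam/2)^(j-1) N c
    have heq : (2/lam) ^ (m-j) * (2 * (lam/2) ^ (m-1) * N * (p-lam)^2)
        = 2 * (lam/2) ^ (j-1) * N * (p-lam)^2 := by
      rw [← hpowsplit]
      linear_combination (2 * (lam/2)^(j-1) * N * (p-lam)^2) * hinvpow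
    have h4le : (4:ℝ) ≤ 2/lam := by
      rw [le_div_iff₀ hlam0]; linarith
    have h4pow : (4:ℝ) ^ (m-j) ≤ (2/lam) ^ (m-j) :=
      pow_le_pow_left₀ (by norm_num) h4le _
    have hklog : ((m - j + 1 : ℕ) : ℝ) * Real.log m ≤ 2 * Nj j * (p-lam)^2 := by
      have s1 : ((m - j + 1 : ℕ) : ℝ) ≤ 4 ^ (m - j) := by
        push_cast; have := hpow4 (m - j); linarith
      have s2 : ((m - j + 1 : ℕ) : ℝ) * Real.log m ≤ (2/lam) ^ (m-j) * Real.log m := by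
        apply mul_le_mul_of_nonneg_right (le_trans s1 h4pow) hlogm.le
      have s3 : (2/lam) ^ (m-j) * Real.log m
          ≤ (2/lam) ^ (m-j) * (2 * (lam/2) ^ (m-1) * N * (p-lam)^2) := by
        apply mul_le_mul_of_nonneg_left hlog (by positivity)
      have s4 : 2 * (lam/2) ^ (j-1) * N * (p-lam)^2 ≤ 2 * Nj j * (p-lam)^2 := by
        have := hNj j hj1 hjm
        nlinarith [pow_pos hq0 (j-1)]
      linarith [heq ▸ s3]
    have : Real.exp (-2 * Nj j * (p-lam)^2)
        ≤ Real.exp (-(((m - j + 1 : ℕ) : ℝ) * Real.log m)) := by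
      apply Real.exp_le_exp.mpr; linarith
    refine this.trans ?_
    have hexp : Real.exp (-(((m - j + 1 : ℕ) : ℝ) * Real.log m)) = (1/m : ℝ) ^ (m - j + 1) := by
      rw [Real.exp_neg, Real.exp_nat_mul, Real.exp_log hmpos]
      rw [one_div, inv_pow]
    rw [hexp]
    apply pow_le_pow_left₀ (by positivity)
    rw [div_le_div_iff₀ hmpos (by norm_num)]
    have hm6 : (6:ℝ) ≤ m := by exact_mod_cast hm
    linarith
  -- main induction
  have main : ∀ j, 1 ≤ j → j ≤ m →
      1 - 6/5 * (1/6:ℝ) ^ (m - j + 1) ≤ (P (⋂ i ∈ Finset.Icc 1 j, A i)).toReal := by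
    intro j h1j
    induction j, h1j using Nat.le_induction with
    | base =>
      intro hjm
      have hA1 : (⋂ i ∈ Finset.Icc 1 1, A i) = A 1 := by simp
      rw [hA1]
      have hk := key 1 le_rfl hjm
      have ht : (0:ℝ) ≤ (1/6:ℝ) ^ (m - 1 + 1) := by positivity
      linarith
    | succ j hj1 IH =>
      intro hjm
      have hjm' : j ≤ m := by omega
      have hP := IH hjm'
      have hk := key (j+1) (by omega) hjm
      have hstep := hj (j+1) (by omega) hjm
      simp only [Nat.add_sub_cancel] at hstep
      set t : ℝ := (1/6:ℝ) ^ (m - (j+1) + 1) with hT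
      have hsplit : (1/6:ℝ) ^ (m - j + 1) = (1/6) * t := by
        rw [hT, ← pow_succ']; congr 1; omega
      have ht0 : (0:ℝ) ≤ t := by rw [hT]; positivity
      have ht1 : t ≤ 1 := by
        rw [hT]; exact pow_le_one₀ (by norm_num) (by norm_num)
      have he0 : (0:ℝ) ≤ Real.exp (-2 * Nj (j+1) * (p - lam) ^ 2) := Real.exp_nonneg _
      have he1 : Real.exp (-2 * Nj (j+1) * (p - lam) ^ 2) ≤ 1 := hk.trans ht1
      have hmono : (1 - Real.exp (-2 * Nj (j+1) * (p - lam) ^ 2)) *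
          (1 - 6/5 * (1/6:ℝ) ^ (m - j + 1)) ≤
          (1 - Real.exp (-2 * Nj (j+1) * (p - lam) ^ 2)) *
          (P (⋂ i ∈ Finset.Icc 1 j, A i)).toReal := by
        apply mul_le_mul_of_nonneg_left hP (by linarith)
      have hfinal : 1 - 6/5 * t ≤ (1 - Real.exp (-2 * Nj (j+1) * (p - lam) ^ 2)) *
          (1 - 6/5 * (1/6:ℝ) ^ (m - j + 1)) := by
        rw [hsplit]
        nlinarith [hk, ht0]
      linarith
  have hmm := main m (by omega) le_rfl
  have : m - m + 1 = 1 := by omega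
  rw [this, pow_one] at hmm
  linarith
end

section
/- Let n be a positive natural number, let H be an n × n Hermitian complex matrix, and let ε be a real number such that the matrix 1 − ε²·H² is positive semidefinite. Let S denote the positive semidefinite square root of 1 − ε²·H². Then the matrix S + i·ε·H is unitary. -/
open Matrix
open scoped ComplexOrder

/-- The square root of a positive semidefinite matrix, as `Matrix.PosSemidef.sqrt` was defined
in Mathlib (December 2024); it has since been removed from Mathlib. -/
noncomputable def Matrix.PosSemidef.sqrt {n 𝕜 : Type*} [Fintype n] [RCLike 𝕜] [DecidableEq n]
    {A : Matrix n n 𝕜} (hA : A.PosSemidef) : Matrix n n 𝕜 :=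
  hA.1.eigenvectorUnitary.1 * diagonal ((↑) ∘ (hA.1.eigenvalues · |>.sqrt)) *
  (star hA.1.eigenvectorUnitary : Matrix n n 𝕜)

/-- The transformation √(I − ε²H²) + iεH implemented in the paper in place
of the full evolution e^{iεH} is unitary, where H is Hermitian and
I − ε²H² is positive semidefinite with positive semidefinite square root S. -/
theorem stmt_12 (n : ℕ) (hn : 0 < n) (H : Matrix (Fin n) (Fin n) ℂ)
    (hH : H.IsHermitian) (ε : ℝ)
    (hps : ((1 : Matrix (Fin n) (Fin n) ℂ) - (ε : ℂ) ^ 2 • H ^ 2).PosSemidef) :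
    hps.sqrt + Complex.I • (ε : ℂ) • H ∈ Matrix.unitaryGroup (Fin n) ℂ := by
  set A := (1 : Matrix (Fin n) (Fin n) ℂ) - (ε : ℂ) ^ 2 • H ^ 2 with hA
  set U : Matrix (Fin n) (Fin n) ℂ := (hH.eigenvectorUnitary : Matrix (Fin n) (Fin n) ℂ) with hU
  have hUU : U * star U = 1 := (Matrix.mem_unitaryGroup_iff).mp hH.eigenvectorUnitary.2
  have hUU' : star U * U = 1 := (Matrix.mem_unitaryGroup_iff').mp hH.eigenvectorUnitary.2
  set μ := hH.eigenvalues with hμ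
  have hspec : H = U * diagonal (Complex.ofReal ∘ μ) * star U := hH.spectral_theorem
  have conj_mul : ∀ (X Y : Matrix (Fin n) (Fin n) ℂ),
      (U * X * star U) * (U * Y * star U) = U * (X * Y) * star U := by
    intro X Y
    simp only [mul_assoc]
    rw [← mul_assoc (star U) U, hUU', one_mul]
  -- eigenvalue bound
  have key : ∀ i, 0 ≤ 1 - ε ^ 2 * μ i ^ 2 := by
    intro i
    set x : Fin n → ℂ := ⇑(hH.eigenvectorBasis i) with hx'
    have hx : 0 ≤ star x ⬝ᵥ (A *ᵥ x) := hps.dotProduct_mulVec_nonneg x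
    have h1 : H *ᵥ x = (μ i : ℂ) • x := by
      have h := hH.mulVec_eigenvectorBasis i
      funext j
      have := congrFun h j
      simpa [Complex.real_smul] using this
    have h2 : (H ^ 2) *ᵥ x = ((μ i : ℂ) ^ 2) • x := by
      rw [pow_two, ← mulVec_mulVec, h1, mulVec_smul, h1, smul_smul, ← pow_two]
    have hv : A *ᵥ x = ((1 - ε ^ 2 * μ i ^ 2 : ℝ) : ℂ) • x := by
      simp only [hA, sub_mulVec, smul_mulVec, one_mulVec, h2]
      push_cast
      rw [sub_smul, one_smul, smul_smul]
    have hnorm : star x ⬝ᵥ x = 1 := by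
      have h := hH.eigenvectorBasis.orthonormal.1 i
      have : (inner ℂ (hH.eigenvectorBasis i) (hH.eigenvectorBasis i) : ℂ) = 1 := by
        rw [inner_self_eq_norm_sq_to_K, h]; norm_num
      rw [EuclideanSpace.inner_eq_star_dotProduct] at this
      rwa [dotProduct_comm] at this
    rw [hv, dotProduct_smul, hnorm, smul_eq_mul, mul_one] at hx
    have h0 := (Complex.le_def.mp hx).1
    simp only [Complex.zero_re, Complex.ofReal_re] at h0
    linarith
  -- square root candidate
  set E : Matrix (Fin n) (Fin n) ℂ :=
    diagonal (fun i => (Real.sqrt (1 - ε ^ 2 * μ i ^ 2) : ℂ)) with hE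
  have hEpsd : E.PosSemidef := posSemidef_diagonal_iff.mpr fun i => by
    rw [Complex.le_def]; simp [Real.sqrt_nonneg]
  have hSpsd : (U * E * star U).PosSemidef := by
    simpa [mul_assoc, Matrix.star_eq_conjTranspose] using hEpsd.mul_mul_conjTranspose_same U
  have hE2 : E * E = diagonal (fun i => ((1 - ε ^ 2 * μ i ^ 2 : ℝ) : ℂ)) := by
    rw [hE, diagonal_mul_diagonal]
    exact congrArg diagonal (funext fun i => by
      rw [← Complex.ofReal_mul, Real.mul_self_sqrt (key i)])
  have hH2 : H ^ 2 = U * (diagonal (Complex.ofReal ∘ μ) * diagonal (Complex.ofReal ∘ μ)) * star U := by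
    rw [pow_two]
    conv_lhs => rw [hspec]
    rw [conj_mul]
  have hdiag : diagonal (fun i => ((1 - ε ^ 2 * μ i ^ 2 : ℝ) : ℂ))
      = (1 : Matrix (Fin n) (Fin n) ℂ)
        - (ε : ℂ) ^ 2 • (diagonal (Complex.ofReal ∘ μ) * diagonal (Complex.ofReal ∘ μ)) := by
    rw [diagonal_mul_diagonal]
    ext i j
    rcases eq_or_ne i j with h | h
    · subst h
      simp only [diagonal_apply_eq, Matrix.sub_apply, Matrix.one_apply_eq, Matrix.smul_apply,
        smul_eq_mul, Function.comp_apply]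
      push_cast
      ring
    · simp [diagonal_apply_ne _ h, Matrix.one_apply_ne h]
  have hsq : (U * E * star U) ^ 2 = A := by
    rw [pow_two, conj_mul, hE2, hdiag, mul_sub, sub_mul, mul_one, hUU, hA, hH2,
      Matrix.mul_smul, Matrix.smul_mul]
  have hSeq : hps.sqrt = U * E * star U := by
    open scoped MatrixOrder in
    rw [show hps.sqrt = hps.1.cfc Real.sqrt from by
        rw [IsHermitian.cfc, Unitary.conjStarAlgAut_apply]; rfl,
      ← hps.1.cfc_eq, ← cfcₙ_eq_cfc (a := A) Real.continuous_sqrt.continuousOn Real.sqrt_zero, ← CFC.sqrt_eq_real_sqrt A hps.nonneg,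
      CFC.sqrt_eq_iff A _ hps.nonneg hSpsd.nonneg, ← pow_two, hsq]
  -- commutation
  have hED : E * diagonal (Complex.ofReal ∘ μ) = diagonal (Complex.ofReal ∘ μ) * E := by
    rw [hE, diagonal_mul_diagonal, diagonal_mul_diagonal]
    exact congrArg diagonal (funext fun i => mul_comm _ _)
  have hcomm : (U * E * star U) * H = H * (U * E * star U) := by
    rw [hspec, conj_mul, conj_mul, hED]
  -- finish
  rw [Matrix.mem_unitaryGroup_iff]
  have hstar : star (hps.sqrt + Complex.I • (ε : ℂ) • H)
      = hps.sqrt - Complex.I • (ε : ℂ) • H := by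
    rw [star_add, star_smul, star_smul, Matrix.star_eq_conjTranspose H, hH.eq,
      Matrix.star_eq_conjTranspose hps.sqrt, (show hps.sqrt.IsHermitian from hSeq ▸ hSpsd.1).eq]
    simp [Complex.star_def, Complex.conj_I, sub_eq_add_neg, neg_smul]
  rw [hstar, hSeq]
  set S := U * E * star U with hS
  have hS2 : S * S = A := by rw [← pow_two]; exact hsq
  have hcomm' : S * (Complex.I • (ε : ℂ) • H) = (Complex.I • (ε : ℂ) • H) * S := by
    rw [Matrix.mul_smul, Matrix.mul_smul, Matrix.smul_mul, Matrix.smul_mul, hcomm]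
  have hsc : (Complex.I • (ε : ℂ) • H) * (Complex.I • (ε : ℂ) • H)
      = -((ε : ℂ) ^ 2 • H ^ 2) := by
    rw [Matrix.smul_mul, Matrix.smul_mul, Matrix.mul_smul, Matrix.mul_smul,
      smul_smul, smul_smul, smul_smul, ← pow_two]
    rw [show Complex.I * (ε : ℂ) * Complex.I * (ε : ℂ)
        = Complex.I * Complex.I * ((ε : ℂ) * (ε : ℂ)) from by ring, Complex.I_mul_I]
    rw [show (-1 : ℂ) * ((ε : ℂ) * (ε : ℂ)) = -((ε : ℂ) ^ 2) from by ring, neg_smul]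
  rw [add_mul, mul_sub, mul_sub, hS2, hcomm', hsc, sub_neg_eq_add, hA]
  abel
end

section
/- Let n be a natural number, let z : Fin (n+1) → ℂ with z 0 = 1 and Σ_{j=1}^{n} |z_j|² = 1, and let a : Fin (n+1) → Fin (n+1) → Fin (n+1) → ℂ with a α k l = a α l k. Define f : Fin (n+1) → ℂ by f α = Σ_{k,l} a α k l · z k · z l, and assume the map is measure preserving: f 0 = 1 and Σ_{α=1}^{n} |f α|² = 1. Let φ ∈ ℂ^{Fin (n+1)} be the vector φ_j = z_j/√2, let (φ ⊠ φ)_{(j,k)} = φ_j·φ_k, and let A be the matrix with entries A_{(α,β),(k,l)} = a α k l if β = 0 and 0 otherwise. Then ‖A·(φ ⊠ φ)‖ = 1/√2 in the Euclidean norm; consequently, for any real ε, ‖ε·A·(φ ⊠ φ)‖² = ε²/2. -/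
open Matrix

/-- Success-probability computation of the paper: for a measure-preserving
quadratic map encoded in the operator A = Σ_{α,k,l} a^{(α)}_{kl}|α0⟩⟨kl|,
the vector A(φ ⊠ φ) has Euclidean norm 1/√2, so postselection succeeds with
probability ε²/2. -/
theorem stmt_14 (n : ℕ) (z : Fin (n + 1) → ℂ) (hz : z 0 = 1)
    (hznorm : ∑ j ∈ Finset.univ.erase 0, ‖z j‖ ^ 2 = 1)
    (a : Fin (n + 1) → Fin (n + 1) → Fin (n + 1) → ℂ)
    (hsymm : ∀ α k l, a α k l = a α l k)
    (f : Fin (n + 1) → ℂ)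
    (hf : ∀ α, f α = ∑ k, ∑ l, a α k l * z k * z l)
    (hf0 : f 0 = 1)
    (hfnorm : ∑ α ∈ Finset.univ.erase 0, ‖f α‖ ^ 2 = 1)
    (φ : Fin (n + 1) → ℂ) (hφ : ∀ j, φ j = z j / (Real.sqrt 2 : ℂ))
    (Φ : Fin (n + 1) × Fin (n + 1) → ℂ) (hΦ : ∀ p, Φ p = φ p.1 * φ p.2)
    (A : Matrix (Fin (n + 1) × Fin (n + 1)) (Fin (n + 1) × Fin (n + 1)) ℂ)
    (hA : ∀ p q, A p q = if p.2 = 0 then a p.1 q.1 q.2 else 0)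
    (v : EuclideanSpace ℂ (Fin (n + 1) × Fin (n + 1)))
    (hv : v = (WithLp.equiv 2 _).symm (A.mulVec Φ)) :
    ‖v‖ = 1 / Real.sqrt 2 ∧ ∀ ε : ℝ, ‖(ε : ℂ) • v‖ ^ 2 = ε ^ 2 / 2 := by
  have hs2 : ((Real.sqrt 2 : ℝ) : ℂ) * ((Real.sqrt 2 : ℝ) : ℂ) = 2 := by
    rw [← Complex.ofReal_mul, Real.mul_self_sqrt (by norm_num)]
    norm_num
  have hsne : ((Real.sqrt 2 : ℝ) : ℂ) ≠ 0 := by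
    simp only [ne_eq, Complex.ofReal_eq_zero]
    exact Real.sqrt_ne_zero'.2 (by norm_num : (0:ℝ) < 2)
  have hv0 : ∀ α : Fin (n+1), v (α, 0) = f α / 2 := by
    intro α
    rw [hv]
    show Matrix.mulVec A Φ (α, 0) = f α / 2
    rw [Matrix.mulVec, dotProduct, Fintype.sum_prod_type, hf,
      Finset.sum_div]
    refine Finset.sum_congr rfl fun k _ => ?_
    rw [Finset.sum_div]
    refine Finset.sum_congr rfl fun l _ => ?_
    rw [hA, hΦ, hφ, hφ]
    simp only [if_pos rfl, if_true]
    field_simp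
    linear_combination (-1 : ℂ) * a α k l * z k * z l * hs2
  have hvne : ∀ (α β : Fin (n+1)), β ≠ 0 → v (α, β) = 0 := by
    intro α β hβ
    rw [hv]
    show Matrix.mulVec A Φ (α, β) = 0
    rw [Matrix.mulVec, dotProduct]
    apply Finset.sum_eq_zero
    intro q _
    rw [hA]
    simp [hβ]
  have hsum : ∑ p : Fin (n+1) × Fin (n+1), ‖v p‖^2 = 1/2 := by
    rw [Fintype.sum_prod_type]
    have hinner : ∀ α : Fin (n+1), (∑ β : Fin (n+1), ‖v (α, β)‖^2)
        = ‖f α‖^2 / 4 := by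
      intro α
      rw [Finset.sum_eq_single_of_mem 0 (Finset.mem_univ _)
        (fun β _ hβ => by rw [hvne α β hβ]; simp)]
      rw [hv0]
      rw [norm_div]
      simp [div_pow]
      norm_num
    simp only [hinner]
    have : ∑ α : Fin (n+1), ‖f α‖^2 = 2 := by
      rw [← Finset.add_sum_erase _ _ (Finset.mem_univ 0), hfnorm, hf0]
      norm_num
    rw [← Finset.sum_div, this]
    norm_num
  have hnorm : ‖v‖ = 1 / Real.sqrt 2 := by
    rw [EuclideanSpace.norm_eq, hsum, one_div, Real.sqrt_inv, one_div]
  refine ⟨hnorm, fun ε => ?_⟩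
  rw [norm_smul, hnorm, Complex.norm_real, Real.norm_eq_abs, mul_pow,
    sq_abs, div_pow, one_pow, Real.sq_sqrt (by norm_num : (0:ℝ) ≤ 2)]
  ring
end
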